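/- The subring R = ℝ + Xℂ[X] of the polynomial ring ℂ[X], consisting of all polynomials with complex coefficients whose constant term is real, is not an MCD-finite domain: there exists a nonempty finite subset of nonzero elements of R having infinitely many pairwise non-associate maximal common divisors. -/

import Mathlib

/-- `d` is a maximal common divisor (MCD) of a set `S` if `d` is a common divisor of `S`
and the only common divisors of `{s/d : s ∈ S}` are the units, i.e. whenever `d * e`
divides every element of `S`, `e` is a unit. -/
def IsMCD {α : Type*} [CommMonoid α] (S : Set α) (d : α) : Prop :=
  (∀ s ∈ S, d ∣ s) ∧ ∀ e : α, (∀ s ∈ S, d * e ∣ s) → IsUnit e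

/-- An integral domain is MCD-finite if every nonempty finite set of nonzero elements has
only finitely many maximal common divisors up to associates. -/
def IsMCDFiniteDomain (R : Type*) [CommRing R] : Prop :=
  ∀ S : Finset R, S.Nonempty → (∀ s ∈ S, s ≠ (0 : R)) →
    (Associates.mk '' {d : R | IsMCD (↑S : Set R) d}).Finite

/-- The subring `ℝ + Xℂ[X]` of `ℂ[X]`: all polynomials with complex coefficients whose
constant term is real. -/
noncomputable def realConstSubring : Subring (Polynomial ℂ) where
  carrier := {f : Polynomial ℂ | ∃ r : ℝ, f.coeff 0 = (r : ℂ)}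
  zero_mem' := ⟨0, by simp⟩
  one_mem' := ⟨1, by simp⟩
  add_mem' := by
    rintro a b ⟨r, hr⟩ ⟨s, hs⟩
    exact ⟨r + s, by simp [hr, hs]⟩
  mul_mem' := by
    rintro a b ⟨r, hr⟩ ⟨s, hs⟩
    exact ⟨r * s, by simp [Polynomial.mul_coeff_zero, hr, hs]⟩
  neg_mem' := by
    rintro a ⟨r, hr⟩
    exact ⟨-r, by simp [hr]⟩

open Polynomial Complex

noncomputable def X2 : realConstSubring := ⟨X^2, 0, by simp⟩
noncomputable def iX2 : realConstSubring := ⟨C I * X^2, 0, by simp [Polynomial.mul_coeff_zero]⟩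
noncomputable def dT (c : ℂ) : realConstSubring := ⟨C c * X, 0, by simp [Polynomial.mul_coeff_zero]⟩

lemma unit_of_real (a : ℝ) (ha : a ≠ 0) (e : realConstSubring)
    (he : (e : ℂ[X]) = C (a : ℂ)) : IsUnit e := by
  apply IsUnit.of_mul_eq_one (a := e) ⟨C ((a⁻¹ : ℝ) : ℂ), a⁻¹, by simp⟩
  apply Subtype.ext
  push_cast
  rw [he, ← map_mul]
  rw [mul_inv_cancel₀ (by exact_mod_cast ha)]
  simp

lemma mcd (c : ℂ) (hc : c ≠ 0) : IsMCD ({X2, iX2} : Set realConstSubring) (dT c) := by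
  constructor
  · rintro s (rfl | rfl)
    · refine ⟨⟨C c⁻¹ * X, 0, by simp [Polynomial.mul_coeff_zero]⟩, Subtype.ext ?_⟩
      show (X^2 : ℂ[X]) = (C c * X) * (C c⁻¹ * X)
      rw [mul_mul_mul_comm, ← C_mul, mul_inv_cancel₀ hc, map_one, one_mul, sq]
    · refine ⟨⟨C (I * c⁻¹) * X, 0, by simp [Polynomial.mul_coeff_zero]⟩, Subtype.ext ?_⟩
      show (C I * X^2 : ℂ[X]) = (C c * X) * (C (I * c⁻¹) * X)
      rw [mul_mul_mul_comm, ← C_mul, sq]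
      congr 1
      rw [mul_comm I c⁻¹, ← mul_assoc, mul_inv_cancel₀ hc, one_mul]
  · intro e he
    obtain ⟨q, hq⟩ := he X2 (Or.inl rfl)
    obtain ⟨q', hq'⟩ := he iX2 (Or.inr rfl)
    have hqv : (X^2 : ℂ[X]) = (C c * X) * (e : ℂ[X]) * (q : ℂ[X]) := congrArg Subtype.val hq
    have hqv' : (C I * X^2 : ℂ[X]) = (C c * X) * (e : ℂ[X]) * (q' : ℂ[X]) := congrArg Subtype.val hq'
    have hcx : (C c * X : ℂ[X]) ≠ 0 := by
      simp [hc, X_ne_zero]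
    have hpq : (e : ℂ[X]) * (q : ℂ[X]) = C c⁻¹ * X := by
      apply mul_left_cancel₀ hcx
      rw [← mul_assoc, ← hqv, mul_mul_mul_comm, ← C_mul, mul_inv_cancel₀ hc, map_one, one_mul, sq]
    have hpq' : (e : ℂ[X]) * (q' : ℂ[X]) = C (I * c⁻¹) * X := by
      apply mul_left_cancel₀ hcx
      rw [← mul_assoc, ← hqv', mul_mul_mul_comm, ← C_mul, sq]
      congr 1
      rw [mul_comm I c⁻¹, ← mul_assoc, mul_inv_cancel₀ hc, one_mul]
    have hc' : (c⁻¹ : ℂ) ≠ 0 := inv_ne_zero hc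
    have hrhs : (C c⁻¹ * X : ℂ[X]) ≠ 0 := by simp [hc', X_ne_zero]
    have he0 : (e : ℂ[X]) ≠ 0 := fun h => hrhs (by rw [← hpq, h, zero_mul])
    have hq0 : (q : ℂ[X]) ≠ 0 := fun h => hrhs (by rw [← hpq, h, mul_zero])
    have hq'0 : (q' : ℂ[X]) ≠ 0 := by
      intro h
      apply X_ne_zero (R := ℂ)
      have := hpq'
      rw [h, mul_zero] at this
      have hIc : (I * c⁻¹ : ℂ) ≠ 0 := mul_ne_zero I_ne_zero hc'
      rcases mul_eq_zero.mp this.symm with h1 | h2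
      · exact absurd (C_eq_zero.mp h1) hIc
      · exact h2
    by_cases hdeg : (e : ℂ[X]).natDegree = 0
    · have heC : (e : ℂ[X]) = C ((e : ℂ[X]).coeff 0) := eq_C_of_natDegree_eq_zero hdeg
      obtain ⟨a, hae⟩ := e.2
      have ha : a ≠ 0 := by
        intro h
        apply he0
        rw [heC, hae, h]
        simp
      exact unit_of_real a ha e (by rw [heC, hae])
    · exfalso
      have hdm : (e : ℂ[X]).natDegree + (q : ℂ[X]).natDegree = 1 := by
        have := congrArg natDegree hpq
        rwa [natDegree_mul he0 hq0, natDegree_C_mul hc', natDegree_X] at this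
      have hdm' : (e : ℂ[X]).natDegree + (q' : ℂ[X]).natDegree = 1 := by
        have := congrArg natDegree hpq'
        rwa [natDegree_mul he0 hq'0, natDegree_C_mul (mul_ne_zero I_ne_zero hc'),
          natDegree_X] at this
      have hq_deg : (q : ℂ[X]).natDegree = 0 := by omega
      have hq'_deg : (q' : ℂ[X]).natDegree = 0 := by omega
      obtain ⟨r, hr⟩ := q.2
      obtain ⟨s, hs⟩ := q'.2
      have hqC : (q : ℂ[X]) = C (r : ℂ) := by rw [eq_C_of_natDegree_eq_zero hq_deg, hr]
      have hq'C : (q' : ℂ[X]) = C (s : ℂ) := by rw [eq_C_of_natDegree_eq_zero hq'_deg, hs]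
      -- q' * (e*q) = q * (e*q')
      have key : C (s : ℂ) * (C c⁻¹ * X) = C (r : ℂ) * (C (I * c⁻¹) * X) := by
        rw [← hpq, ← hpq', ← hqC, ← hq'C]; ring
      have key2 : (s : ℂ) * c⁻¹ = (r : ℂ) * (I * c⁻¹) := by
        have := congrArg (fun p => Polynomial.coeff p 1) key
        simpa using this
      have key3 : (s : ℂ) = (r : ℂ) * I := by
        field_simp at key2
        linear_combination key2
      have hr0 : r = 0 := by
        have h5 := congrArg Complex.im key3
        simp at h5
        exact h5.symm
      apply hq0
      rw [hqC, hr0]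
      simp

lemma dT_inj : Function.Injective (fun t : ℝ => Associates.mk (dT (1 + t * I))) := by
  intro t₁ t₂ h
  rw [Associates.mk_eq_mk_iff_associated] at h
  obtain ⟨u, hu⟩ := h
  have hval : (C (1 + (t₁:ℂ) * I) * X) * ((u : realConstSubring) : ℂ[X])
      = C (1 + (t₂:ℂ) * I) * X := congrArg Subtype.val hu
  have huu : IsUnit ((u : realConstSubring) : ℂ[X]) :=
    (Units.isUnit u).map realConstSubring.subtype
  rw [Polynomial.isUnit_iff] at huu
  obtain ⟨b, hb, hbe⟩ := huu
  obtain ⟨r, hr⟩ := (u : realConstSubring).2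
  have hbr : b = (r : ℂ) := by
    have : ((u : realConstSubring) : ℂ[X]).coeff 0 = b := by rw [← hbe]; simp
    rw [this] at hr; exact hr
  rw [← hbe, hbr] at hval
  have key : (1 + (t₁:ℂ) * I) * r = 1 + (t₂:ℂ) * I := by
    have := congrArg (fun p => Polynomial.coeff p 1) hval
    simp at this
    linear_combination this
  have hre := congrArg Complex.re key
  have him := congrArg Complex.im key
  simp at hre him
  rw [hre] at him
  simpa using him

lemma main_part : ∃ S : Finset realConstSubring, S.Nonempty ∧ (∀ s ∈ S, s ≠ 0) ∧
    (Associates.mk '' {d : realConstSubring | IsMCD (↑S : Set realConstSubring) d}).Infinite := by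
  classical
  refine ⟨{X2, iX2}, ⟨X2, Finset.mem_insert_self _ _⟩, ?_, ?_⟩
  · intro s hs
    rcases Finset.mem_insert.mp hs with rfl | hs
    · intro h
      have : (X^2 : ℂ[X]) = 0 := congrArg Subtype.val h
      exact pow_ne_zero 2 X_ne_zero this
    · rw [Finset.mem_singleton.mp hs]
      intro h
      have : (C I * X^2 : ℂ[X]) = 0 := congrArg Subtype.val h
      simp [I_ne_zero, X_ne_zero] at this
  · have hcoe : (↑({X2, iX2} : Finset realConstSubring) : Set realConstSubring)
        = {X2, iX2} := by simp
    rw [hcoe]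
    apply Set.infinite_of_injective_forall_mem dT_inj
    intro t
    refine ⟨dT (1 + t * I), ?_, rfl⟩
    apply mcd
    intro h
    have := congrArg Complex.re h
    simp at this


/-- `R = ℝ + Xℂ[X]` is not an MCD-finite domain: there is a nonempty finite
set of nonzero elements of `R` having infinitely many pairwise non-associate maximal common
divisors. -/
theorem realConstSubring_not_mcd_finite :
    ¬ IsMCDFiniteDomain realConstSubring ∧
    ∃ S : Finset realConstSubring, S.Nonempty ∧ (∀ s ∈ S, s ≠ 0) ∧
      (Associates.mk '' {d : realConstSubring | IsMCD (↑S : Set realConstSubring) d}).Infinite := by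
  constructor
  · intro h
    obtain ⟨S, hne, hnz, hinf⟩ := main_part
    exact hinf (h S hne hnz)
  · exact main_part
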